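/- For z₁, z₂ in the open unit disk ℂ with z₁·z₂ ≠ 0, the polynomial P(u) = conj(z₁)·conj(z₂)·u⁴ - (conj(z₁)+conj(z₂))·u³ + (z₁+z₂)·u - z₁·z₂ has at least one root u with |u| = 1. -/

import Mathlib

open Complex ComplexConjugate

theorem alhazen_quartic_has_unimodular_root (z₁ z₂ : ℂ)
    (h₁ : ‖z₁‖ < 1) (h₂ : ‖z₂‖ < 1) (hz : z₁ * z₂ ≠ 0) :
    ∃ u : ℂ, ‖u‖ = 1 ∧
      conj z₁ * conj z₂ * u ^ 4 - (conj z₁ + conj z₂) * u ^ 3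
        + (z₁ + z₂) * u - z₁ * z₂ = 0 := by
  set a : ℂ := conj z₁ * conj z₂ with ha
  set b : ℂ := -(conj z₁ + conj z₂) with hb
  have hz₁ : z₁ ≠ 0 := fun h => hz (by simp [h])
  have hz₂ : z₂ ≠ 0 := fun h => hz (by simp [h])
  have ha0 : a ≠ 0 := by
    simp [ha, mul_ne_zero_iff]
    exact ⟨hz₁, hz₂⟩
  set w : ℂ := Complex.exp ((-(a.arg) / 2 : ℝ) * Complex.I) with hw
  have hwabs : ‖w‖ = 1 := Complex.norm_exp_ofReal_mul_I _
  have haw : a * w ^ 2 = ((‖a‖ : ℝ) : ℂ) := by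
    conv_lhs => rw [← Complex.norm_mul_exp_arg_mul_I a]
    rw [hw, ← Complex.exp_nat_mul, mul_assoc, ← Complex.exp_add]
    push_cast
    ring_nf
    simp
  set H : ℝ → ℝ := fun θ => (a * (w * Complex.exp (θ * Complex.I)) ^ 2
      + b * (w * Complex.exp (θ * Complex.I))).im with hH
  have hcont : Continuous H := by
    apply Complex.continuous_im.comp
    fun_prop
  have hHpi : H Real.pi = -(H 0) := by
    simp only [hH]
    rw [Complex.ofReal_zero, zero_mul, Complex.exp_zero]
    push_cast
    rw [Complex.exp_pi_mul_I]
    have e1 : a * (w * -1) ^ 2 = a * w ^ 2 := by ring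
    have e2 : a * (w * 1) ^ 2 = a * w ^ 2 := by ring
    rw [e1, e2, haw]
    simp [Complex.add_im, Complex.sub_im]
  have hmem : (0 : ℝ) ∈ Set.uIcc (H 0) (H Real.pi) := by
    rw [Set.mem_uIcc, hHpi]
    rcases le_total (H 0) 0 with h | h
    · left; constructor <;> linarith
    · right; constructor <;> linarith
  obtain ⟨θ, -, hθ⟩ := intermediate_value_uIcc (hcont.continuousOn) hmem
  set u : ℂ := w * Complex.exp (θ * Complex.I) with hu
  have huabs : ‖u‖ = 1 := by
    rw [hu, norm_mul, hwabs, Complex.norm_exp_ofReal_mul_I, one_mul]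
  have hu0 : u ≠ 0 := by
    intro h; rw [h] at huabs; simp at huabs
  have h1 : u * conj u = 1 := by
    rw [Complex.mul_conj, Complex.normSq_eq_norm_sq, huabs]
    norm_num
  have him : (a * u ^ 2 + b * u).im = 0 := hθ
  have hconj : conj (a * u ^ 2 + b * u) = a * u ^ 2 + b * u :=
    Complex.conj_eq_iff_im.mpr him
  have heq : a * u ^ 2 + b * u
      = z₁ * z₂ * (conj u) ^ 2 - (z₁ + z₂) * conj u := by
    conv_lhs => rw [← hconj]
    simp only [map_add, map_mul, map_neg, map_pow, ha, hb, Complex.conj_conj]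
    ring
  refine ⟨u, huabs, ?_⟩
  rw [show conj z₁ + conj z₂ = -b from by rw [hb]; ring]
  linear_combination u ^ 2 * heq + (z₁ * z₂ * (u * conj u + 1) - (z₁ + z₂) * u) * h1
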